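/- For all x, y ∈ 𝕊 and every n ∈ ℕ, d_Δ(x,y) ≤ d_n(x,y) + 2·max{Δ(I) : I ∈ ℐ_n}. In particular, d_n(x,y) → d_Δ(x,y) as n → ∞. -/

import Mathlib

noncomputable section

instance : Fact ((0 : ℝ) < 1) := ⟨one_pos⟩

/-- The closed dyadic arc of level `n` and index `j` in the circle `𝕊 = [0,1]/{0,1}`,
realized as `AddCircle (1 : ℝ)`: the image of `[j/2^n, (j+1)/2^n]`. -/
def dyadicArc (n j : ℕ) : Set (AddCircle (1 : ℝ)) :=
  (fun r : ℝ => (r : AddCircle (1 : ℝ))) '' Set.Icc ((j : ℝ) / 2 ^ n) (((j : ℝ) + 1) / 2 ^ n)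

/-- The left endpoint of the dyadic arc of level `n` and index `j`. -/
def leftPt (n j : ℕ) : AddCircle (1 : ℝ) := (((j : ℝ) / 2 ^ n : ℝ) : AddCircle (1 : ℝ))

/-- The right endpoint of the dyadic arc of level `n` and index `j`. -/
def rightPt (n j : ℕ) : AddCircle (1 : ℝ) := ((((j : ℝ) + 1) / 2 ^ n : ℝ) : AddCircle (1 : ℝ))

/-- `Δ` (given as a function of the level `n` and the index `j < 2^n` of a dyadic arc) is a
dyadic diameter function of type `𝒮₁`: `Δ(𝕊) = 1`, `Δ` is positive, the two children of any
dyadic arc have equal `Δ`-value, which is either half of or equal to that of their parent,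
and `max {Δ(I) : I ∈ ℐ_n} → 0` as `n → ∞`. -/
def IsS1 (Δ : ℕ → ℕ → ℝ) : Prop :=
  Δ 0 0 = 1 ∧
  (∀ n j : ℕ, j < 2 ^ n → 0 < Δ n j) ∧
  (∀ n j : ℕ, j < 2 ^ n → Δ (n + 1) (2 * j) = Δ (n + 1) (2 * j + 1) ∧
    (Δ (n + 1) (2 * j) = Δ n j / 2 ∨ Δ (n + 1) (2 * j) = Δ n j)) ∧
  (∀ ε : ℝ, 0 < ε → ∃ N : ℕ, ∀ n ≥ N, ∀ j < 2 ^ n, Δ n j < ε)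

/-- `c` is a chain of dyadic arcs (given by level-index pairs) joining `x` to `y`:
all indices are valid, the union of the arcs is connected, and it contains `x` and `y`. -/
def IsDyadicChain (N : ℕ) (c : Fin (N + 1) → ℕ × ℕ) (x y : AddCircle (1 : ℝ)) : Prop :=
  (∀ k, (c k).2 < 2 ^ (c k).1) ∧
  IsConnected (⋃ k, dyadicArc (c k).1 (c k).2) ∧
  x ∈ ⋃ k, dyadicArc (c k).1 (c k).2 ∧ y ∈ ⋃ k, dyadicArc (c k).1 (c k).2

/-- The set of sums `Σ Δ'(J_k)` over all chains of dyadic arcs joining `x` and `y`. -/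
def chainSums (Δ' : ℕ → ℕ → ℝ) (x y : AddCircle (1 : ℝ)) : Set ℝ :=
  {s | ∃ (N : ℕ) (c : Fin (N + 1) → ℕ × ℕ), IsDyadicChain N c x y ∧
    s = ∑ k, Δ' (c k).1 (c k).2}

/-- The distance associated to a weight `Δ'` on dyadic arcs:
`d(x,y) = inf Σ Δ'(J_k)` over all chains of dyadic arcs joining `x` and `y`. -/
def dOf (Δ' : ℕ → ℕ → ℝ) (x y : AddCircle (1 : ℝ)) : ℝ := sInf (chainSums Δ' x y)

/-- The truncation `Δ_n` of `Δ`: `Δ_n(I) = Δ(I)` for arcs of level `≤ n`, and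
`Δ_n(I) = ½ Δ_n(parent of I)` for arcs of level `> n`. -/
def trunc (Δ : ℕ → ℕ → ℝ) (n : ℕ) : ℕ → ℕ → ℝ := fun m j =>
  if m ≤ n then Δ m j else Δ n (j / 2 ^ (m - n)) / 2 ^ (m - n)

open Set

abbrev 𝕋 := AddCircle (1 : ℝ)

/-- the open dyadic arc -/
def oArc (n j : ℕ) : Set 𝕋 :=
  (fun r : ℝ => (r : 𝕋)) '' Set.Ioo ((j : ℝ) / 2 ^ n) (((j : ℝ) + 1) / 2 ^ n)

lemma coe_cont : Continuous (fun r : ℝ => (r : 𝕋)) := AddCircle.continuous_mk' 1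

lemma coe_eq_coe (s t : ℝ) : ((s : ℝ) : 𝕋) = (t : ℝ) ↔ ∃ k : ℤ, (k : ℝ) = s - t := by
  rw [QuotientAddGroup.eq_iff_sub_mem, AddSubgroup.mem_zmultiples_iff]
  constructor
  · rintro ⟨k, hk⟩; exact ⟨k, by simpa using hk⟩
  · rintro ⟨k, hk⟩; exact ⟨k, by simpa using hk⟩

lemma rep_eq {s t : ℝ} (h : ((s : ℝ) : 𝕋) = (t : ℝ)) (h1 : s - t < 1) (h2 : t - s < 1) :
    s = t := by
  obtain ⟨k, hk⟩ := (coe_eq_coe s t).1 h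
  have hk1 : (k : ℝ) < 1 := by linarith
  have hk2 : (-1 : ℝ) < k := by linarith
  have hk0 : k = 0 := by
    have a1 : (k : ℤ) < 1 := by exact_mod_cast hk1
    have a2 : (-1 : ℤ) < k := by exact_mod_cast hk2
    omega
  have : (k : ℝ) = 0 := by exact_mod_cast hk0
  linarith

lemma dyadicArc_def (n j : ℕ) :
    dyadicArc n j = (fun r : ℝ => (r : 𝕋)) '' Set.Icc ((j : ℝ) / 2 ^ n) (((j : ℝ) + 1) / 2 ^ n) :=
  rfl

lemma arc_lt (n j : ℕ) : (j : ℝ) / 2 ^ n < ((j : ℝ) + 1) / 2 ^ n := by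
  have h2 : (0:ℝ) < 2 ^ n := by positivity
  rw [div_lt_div_iff₀ h2 h2]
  nlinarith

lemma arc_nonempty (n j : ℕ) : (dyadicArc n j).Nonempty :=
  ⟨_, Set.mem_image_of_mem _ (Set.left_mem_Icc.2 (arc_lt n j).le)⟩

lemma arc_connected (n j : ℕ) : IsConnected (dyadicArc n j) :=
  (isConnected_Icc (arc_lt n j).le).image _ coe_cont.continuousOn

lemma arc_closed (n j : ℕ) : IsClosed (dyadicArc n j) :=
  ((isCompact_Icc).image coe_cont).isClosed

lemma oArc_subset_arc (n j : ℕ) : oArc n j ⊆ dyadicArc n j :=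
  Set.image_mono Set.Ioo_subset_Icc_self

lemma arc_subset_closure_oArc (n j : ℕ) : dyadicArc n j ⊆ closure (oArc n j) := by
  rw [dyadicArc_def, ← closure_Ioo (arc_lt n j).ne]
  exact (image_closure_subset_closure_image coe_cont)

lemma oArc_connected (n j : ℕ) : IsConnected (oArc n j) :=
  ((isConnected_Ioo (arc_lt n j))).image _ coe_cont.continuousOn

lemma endpoints_mem (n j : ℕ) (hj : j < 2 ^ n) :
    (j : ℝ) / 2 ^ n ∈ Set.Icc (0 : ℝ) 1 ∧ ((j : ℝ) + 1) / 2 ^ n ∈ Set.Icc (0 : ℝ) 1 := by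
  have h2 : (0:ℝ) < 2 ^ n := by positivity
  have hj' : (j : ℝ) + 1 ≤ 2 ^ n := by exact_mod_cast Nat.succ_le_of_lt hj
  constructor <;> constructor
  · positivity
  · rw [div_le_one h2]; linarith
  · positivity
  · rw [div_le_one h2]; exact hj'

/-- uniqueness of representatives in `[0,1]` vs `(0,1)`. -/
lemma rep_unique {s t : ℝ} (hs : s ∈ Set.Icc (0:ℝ) 1) (ht : t ∈ Set.Ioo (0:ℝ) 1)
    (h : ((s : ℝ) : 𝕋) = (t : ℝ)) : s = t := by
  obtain ⟨hs0, hs1⟩ := hs; obtain ⟨ht0, ht1⟩ := ht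
  exact rep_eq h (by linarith) (by linarith)

lemma oArc_disjoint {n i j : ℕ} (hi : i < 2 ^ n) (hj : j < 2 ^ n) (hij : i ≠ j) :
    oArc n i ∩ oArc n j = ∅ := by
  ext z
  simp only [Set.mem_inter_iff, Set.mem_empty_iff_false, iff_false, not_and, oArc]
  rintro ⟨s, hs, rfl⟩ ⟨t, ht, hzt⟩
  have h2 : (0:ℝ) < 2 ^ n := by positivity
  have hsi := endpoints_mem n i hi
  have htj := endpoints_mem n j hj
  have hs' : s ∈ Set.Ioo (0:ℝ) 1 := ⟨lt_of_le_of_lt hsi.1.1 hs.1, lt_of_lt_of_le hs.2 hsi.2.2⟩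
  have ht' : t ∈ Set.Ioo (0:ℝ) 1 := ⟨lt_of_le_of_lt htj.1.1 ht.1, lt_of_lt_of_le ht.2 htj.2.2⟩
  have hst : t = s := rep_unique (Set.Ioo_subset_Icc_self ht') hs' hzt
  subst hst
  -- t in both Ioo's: contradiction since i ≠ j
  rcases Nat.lt_or_ge i j with h | h
  · have : (i:ℝ) + 1 ≤ j := by exact_mod_cast Nat.succ_le_of_lt h
    have := hs.2; have := ht.1
    have : ((i:ℝ)+1)/2^n ≤ (j:ℝ)/2^n := by
      rw [div_le_div_iff₀ h2 h2]; nlinarith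
    linarith
  · have hlt : j < i := lt_of_le_of_ne h (Ne.symm hij)
    have : (j:ℝ) + 1 ≤ i := by exact_mod_cast Nat.succ_le_of_lt hlt
    have : ((j:ℝ)+1)/2^n ≤ (i:ℝ)/2^n := by
      rw [div_le_div_iff₀ h2 h2]; nlinarith
    have := ht.2; have := hs.1
    linarith

lemma Icc_incl {n d i j : ℕ} (h1 : j * 2 ^ d ≤ i) (h2 : i + 1 ≤ (j + 1) * 2 ^ d) :
    Set.Icc ((i:ℝ)/2^(n+d)) (((i:ℝ)+1)/2^(n+d)) ⊆ Set.Icc ((j:ℝ)/2^n) (((j:ℝ)+1)/2^n) := by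
  have hn : (0:ℝ) < 2 ^ n := by positivity
  have hnd : (0:ℝ) < 2 ^ (n+d) := by positivity
  have c1 : ((j:ℝ) * 2 ^ d) ≤ i := by exact_mod_cast h1
  have c2 : ((i:ℝ) + 1) ≤ ((j:ℝ) + 1) * 2 ^ d := by exact_mod_cast h2
  apply Set.Icc_subset_Icc
  · rw [div_le_div_iff₀ hn hnd, pow_add]; push_cast; nlinarith [pow_pos (zero_lt_two (α := ℝ)) n]
  · rw [div_le_div_iff₀ hnd hn, pow_add]; push_cast; nlinarith [pow_pos (zero_lt_two (α := ℝ)) n]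

lemma anc_incl {n m i : ℕ} (hnm : n < m) :
    Set.Icc ((i:ℝ)/2^m) (((i:ℝ)+1)/2^m)
      ⊆ Set.Icc (((i / 2 ^ (m-n) : ℕ):ℝ)/2^n) ((((i / 2 ^ (m-n) : ℕ):ℝ)+1)/2^n) := by
  set d := m - n with hdd
  have hm : m = n + d := by omega
  have h1 : (i / 2 ^ d) * 2 ^ d ≤ i := Nat.div_mul_le_self i _
  have h2 : i + 1 ≤ (i / 2 ^ d + 1) * 2 ^ d := by
    have := Nat.div_add_mod i (2 ^ d)
    have := Nat.mod_lt i (show 0 < 2 ^ d by positivity)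
    nlinarith
  have := Icc_incl (n := n) (d := d) (i := i) (j := i / 2 ^ d) h1 h2
  rwa [← hm] at this

/-- nesting dichotomy: if the arc `(m,i)` meets the open arc `(n,j)` then either `m ≤ n` and
the `(n,j)` interval is inside the `(m,i)` interval, or `n < m` and `(m,i)` is a descendant
of `(n,j)`. -/
lemma nest {m i n j : ℕ} (hi : i < 2 ^ m) (hj : j < 2 ^ n) {t : ℝ}
    (ht1 : t ∈ Set.Icc ((i:ℝ)/2^m) (((i:ℝ)+1)/2^m))
    (ht2 : t ∈ Set.Ioo ((j:ℝ)/2^n) (((j:ℝ)+1)/2^n)) :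
    (m ≤ n ∧ Set.Icc ((j:ℝ)/2^n) (((j:ℝ)+1)/2^n) ⊆ Set.Icc ((i:ℝ)/2^m) (((i:ℝ)+1)/2^m))
    ∨ (n < m ∧ i / 2 ^ (m-n) = j ∧
        Set.Icc ((i:ℝ)/2^m) (((i:ℝ)+1)/2^m) ⊆ Set.Icc ((j:ℝ)/2^n) (((j:ℝ)+1)/2^n)) := by
  have hm : (0:ℝ) < 2 ^ m := by positivity
  have hn : (0:ℝ) < 2 ^ n := by positivity
  -- cross inequalities
  have r1 : (i:ℝ)/2^m < ((j:ℝ)+1)/2^n := lt_of_le_of_lt ht1.1 ht2.2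
  have r2 : (j:ℝ)/2^n < ((i:ℝ)+1)/2^m := lt_of_lt_of_le ht2.1 ht1.2
  rw [div_lt_div_iff₀ hm hn] at r1
  rw [div_lt_div_iff₀ hn hm] at r2
  have n1 : i * 2 ^ n < (j + 1) * 2 ^ m := by exact_mod_cast r1
  have n2 : j * 2 ^ m < (i + 1) * 2 ^ n := by exact_mod_cast r2
  rcases le_or_gt m n with h | h
  · left
    refine ⟨h, ?_⟩
    have hd : n = m + (n - m) := by omega
    set d := n - m
    have p1 : i * 2 ^ d ≤ j := by
      have : i * 2 ^ d * 2 ^ m < (j+1) * 2 ^ m := by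
        calc i * 2 ^ d * 2 ^ m = i * 2 ^ n := by rw [hd, pow_add]; ring
        _ < (j + 1) * 2 ^ m := n1
      have := Nat.lt_of_mul_lt_mul_right this
      omega
    have p2 : j + 1 ≤ (i + 1) * 2 ^ d := by
      have : j * 2 ^ m < (i+1) * 2 ^ d * 2 ^ m := by
        calc j * 2 ^ m < (i + 1) * 2 ^ n := n2
        _ = (i+1) * 2 ^ d * 2 ^ m := by rw [hd, pow_add]; ring
      have := Nat.lt_of_mul_lt_mul_right this
      omega
    have := Icc_incl (n := m) (d := d) (i := j) (j := i) p1 p2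
    rwa [← hd] at this
  · right
    have hd : m = n + (m - n) := by omega
    set d := m - n
    have p1 : j * 2 ^ d ≤ i := by
      have : j * 2 ^ d * 2 ^ n < (i+1) * 2 ^ n := by
        calc j * 2 ^ d * 2 ^ n = j * 2 ^ m := by rw [hd, pow_add]; ring
        _ < (i + 1) * 2 ^ n := n2
      have := Nat.lt_of_mul_lt_mul_right this
      omega
    have p2 : i + 1 ≤ (j + 1) * 2 ^ d := by
      have : i * 2 ^ n < (j+1) * 2 ^ d * 2 ^ n := by
        calc i * 2 ^ n < (j + 1) * 2 ^ m := n1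
        _ = (j+1) * 2 ^ d * 2 ^ n := by rw [hd, pow_add]; ring
      have := Nat.lt_of_mul_lt_mul_right this
      omega
    have hdiv : i / 2 ^ d = j := by
      exact Nat.div_eq_of_lt_le p1 (by omega)
    refine ⟨h, hdiv, ?_⟩
    have := Icc_incl (n := n) (d := d) (i := i) (j := j) p1 p2
    rwa [← hd] at this

open MeasureTheory in
lemma sum_len_ge {ι : Type*} (F : Finset ι) (A B : ι → ℝ) (hAB : ∀ k ∈ F, A k ≤ B k)
    (a b : ℝ) (hcov : Set.Ioo a b ⊆ ⋃ k ∈ F, Set.Icc (A k) (B k)) :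
    b - a ≤ ∑ k ∈ F, (B k - A k) := by
  have hsumnn : (0:ℝ) ≤ ∑ k ∈ F, (B k - A k) :=
    Finset.sum_nonneg fun k hk => sub_nonneg.2 (hAB k hk)
  rcases le_or_gt b a with h | h
  · linarith
  · have h1 : volume (Set.Ioo a b) ≤ volume (⋃ k ∈ F, Set.Icc (A k) (B k)) :=
      measure_mono hcov
    have h2 : volume (⋃ k ∈ F, Set.Icc (A k) (B k)) ≤ ∑ k ∈ F, volume (Set.Icc (A k) (B k)) :=
      measure_biUnion_finset_le F _
    rw [Real.volume_Ioo] at h1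
    have h3 : ∑ k ∈ F, volume (Set.Icc (A k) (B k)) = ENNReal.ofReal (∑ k ∈ F, (B k - A k)) := by
      rw [ENNReal.ofReal_sum_of_nonneg fun k hk => sub_nonneg.2 (hAB k hk)]
      exact Finset.sum_congr rfl fun k hk => Real.volume_Icc
    rw [h3] at h2
    have := h1.trans h2
    rwa [ENNReal.ofReal_le_ofReal_iff hsumnn] at this

open scoped Classical in
/-- At most two open level-`n` dyadic arcs both meet a connected set `U` and are not
contained in it. -/
lemma bad_card_le_two (n : ℕ) (U : Set 𝕋) (hU : IsConnected U) :
    ((Finset.range (2 ^ n)).filter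
      (fun j => (oArc n j ∩ U).Nonempty ∧ (oArc n j \ U).Nonempty)).card ≤ 2 := by
  by_contra hcon
  rw [not_le] at hcon
  obtain ⟨j₁, j₂, j₃, hm1, hm2, hm3, h12, h13, h23⟩ := Finset.two_lt_card_iff.1 hcon
  simp only [Finset.mem_filter, Finset.mem_range] at hm1 hm2 hm3
  obtain ⟨hj₁, ⟨q₁, hq₁A, hq₁U⟩, ⟨p, hpA, hpU⟩⟩ := hm1
  obtain ⟨hj₂, ⟨q₂, hq₂A, hq₂U⟩, ⟨p₂, hp₂A, hp₂U⟩⟩ := hm2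
  obtain ⟨hj₃, ⟨q₃, hq₃A, hq₃U⟩, ⟨p₃, hp₃A, hp₃U⟩⟩ := hm3
  -- representative of the missing point p
  obtain ⟨t₀, ht₀, hpt₀⟩ := hpA
  set a₁ : ℝ := (j₁ : ℝ) / 2 ^ n with ha₁
  set b₁ : ℝ := ((j₁ : ℝ) + 1) / 2 ^ n with hb₁
  have hends := endpoints_mem n j₁ hj₁
  have ha₁0 : 0 ≤ a₁ := hends.1.1
  have hb₁a₁ : b₁ ≤ a₁ + 1 := by
    have h2 : (0:ℝ) < 2 ^ n := by positivity
    have : (1:ℝ) / 2 ^ n ≤ 1 := by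
      rw [div_le_one h2]; exact one_le_pow₀ (by norm_num)
    have : b₁ - a₁ = 1 / 2 ^ n := by rw [ha₁, hb₁]; ring
    linarith
  -- the "unrolling" map
  set f : 𝕋 → ℝ := fun z => ((AddCircle.equivIoc 1 t₀ z : Set.Ioc t₀ (t₀ + 1)) : ℝ) with hf
  have F2 : ∀ z : 𝕋, f z ∈ Set.Ioc t₀ (t₀ + 1) := fun z => (AddCircle.equivIoc 1 t₀ z).2
  have F1 : ∀ z : 𝕋, ((f z : ℝ) : 𝕋) = z := fun z =>
    (AddCircle.equivIoc 1 t₀).symm_apply_apply z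
  have F4 : Function.Injective f := fun z w h => by
    have := F1 z; rw [h, F1 w] at this; exact this.symm
  have F3 : ∀ z : 𝕋, z ≠ ((t₀ : ℝ) : 𝕋) → ContinuousAt f z := fun z hz =>
    (continuous_subtype_val.continuousAt).comp (AddCircle.continuousAt_equivIoc 1 t₀ hz)
  have hpcoe : p = ((t₀ : ℝ) : 𝕋) := hpt₀.symm
  -- image of U
  set S : Set ℝ := f '' U with hS
  have hSconn : IsPreconnected S := by
    apply (hU.image f ?_).isPreconnected
    intro z hz
    exact (F3 z (by rintro rfl; exact hpU (hpcoe ▸ hz))).continuousWithinAt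
  have hSord : S.OrdConnected := hSconn.ordConnected
  have hSne : S.Nonempty := ⟨f q₁, Set.mem_image_of_mem f hq₁U⟩
  have hSbddA : BddAbove S := ⟨t₀ + 1, by rintro s ⟨z, _, rfl⟩; exact (F2 z).2⟩
  have hSbddB : BddBelow S := ⟨t₀, by rintro s ⟨z, _, rfl⟩; exact (F2 z).1.le⟩
  -- images of other open arcs
  have hIord : ∀ j : ℕ, j < 2 ^ n → j ≠ j₁ → (f '' oArc n j).OrdConnected := by
    intro j hj hjne
    apply IsPreconnected.ordConnected
    apply (((oArc_connected n j)).image f ?_).isPreconnected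
    intro z hz
    refine (F3 z ?_).continuousWithinAt
    rintro rfl
    have : ((t₀:ℝ):𝕋) ∈ oArc n j₁ := ⟨t₀, ht₀, rfl⟩
    exact Set.eq_empty_iff_forall_notMem.1 (oArc_disjoint hj hj₁ hjne) _ ⟨hz, this⟩
  -- the hit lemma
  have hhit : ∀ (T : Set ℝ), T.OrdConnected → ∀ u v : ℝ, u ∈ T → v ∈ T → u ∈ S → v ∉ S →
      (sSup S ∈ T ∨ sInf S ∈ T) := by
    intro T hT u v huT hvT huS hvS
    rcases lt_trichotomy u v with h | h | h
    · left
      have h1 : u ≤ sSup S := le_csSup hSbddA huS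
      have h2 : sSup S ≤ v := by
        by_contra hc
        rw [not_le] at hc
        obtain ⟨w, hwS, hvw⟩ := exists_lt_of_lt_csSup hSne hc
        exact hvS (hSord.out huS hwS ⟨h.le, hvw.le⟩)
      exact hT.out huT hvT ⟨h1, h2⟩
    · exact absurd (h ▸ huS) hvS
    · right
      have h1 : sInf S ≤ u := csInf_le hSbddB huS
      have h2 : v ≤ sInf S := by
        by_contra hc
        rw [not_le] at hc
        obtain ⟨w, hwS, hvw⟩ := exists_lt_of_csInf_lt hSne hc
        exact hvS (hSord.out hwS huS ⟨hvw.le, h.le⟩)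
      exact hT.out hvT huT ⟨h2, h1⟩
  -- each of j₂, j₃ captures sSup S or sInf S
  have hcapt : ∀ j : ℕ, j < 2 ^ n → j ≠ j₁ →
      ∀ q pp : 𝕋, q ∈ oArc n j → q ∈ U → pp ∈ oArc n j → pp ∉ U →
      (sSup S ∈ f '' oArc n j ∨ sInf S ∈ f '' oArc n j) := by
    intro j hj hjne q pp hqA hqU hppA hppU
    exact hhit _ (hIord j hj hjne) (f q) (f pp) (Set.mem_image_of_mem f hqA)
      (Set.mem_image_of_mem f hppA) (Set.mem_image_of_mem f hqU)
      (by rintro ⟨z, hzU, hz⟩; exact hppU (F4 hz ▸ hzU))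
  -- q₁'s representative
  obtain ⟨s₁, hs₁, hq₁s₁⟩ := hq₁A
  have hs₁t₀ : s₁ ≠ t₀ := by
    rintro rfl
    apply hpU
    have hpq : p = q₁ := by rw [hpcoe, ← hq₁s₁]
    exact hpq ▸ hq₁U
  -- key blocking facts
  have hblockInf : s₁ > t₀ → ∀ j : ℕ, j < 2 ^ n → j ≠ j₁ → sInf S ∉ f '' oArc n j := by
    intro hgt j hj hjne
    rintro ⟨z, hzA, hzf⟩
    have hfq₁ : f q₁ = s₁ := by
      apply rep_eq
      · rw [F1, ← hq₁s₁]
      · have := (F2 q₁).2; have : s₁ ≤ t₀ + 1 := by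
          have := hs₁.2; linarith [ht₀.1]
        linarith [(F2 q₁).2, (F2 q₁).1]
      · linarith [(F2 q₁).1, hs₁.2, hb₁a₁, ht₀.1]
    have h1 : sInf S ≤ s₁ := hfq₁ ▸ csInf_le hSbddB (Set.mem_image_of_mem f hq₁U)
    have h2 : t₀ < sInf S := by
      have := (F2 z).1; rw [hzf] at this; exact this
    have hmem : sInf S ∈ Set.Ioo a₁ b₁ := ⟨lt_trans ht₀.1 h2, lt_of_le_of_lt h1 hs₁.2⟩
    have : ((sInf S : ℝ) : 𝕋) ∈ oArc n j₁ := ⟨_, hmem, rfl⟩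
    have hz1 : ((sInf S : ℝ) : 𝕋) = z := by rw [← hzf, F1]
    exact Set.eq_empty_iff_forall_notMem.1 (oArc_disjoint hj hj₁ hjne) z ⟨hzA, hz1 ▸ this⟩
  have hblockSup : s₁ < t₀ → ∀ j : ℕ, j < 2 ^ n → j ≠ j₁ → sSup S ∉ f '' oArc n j := by
    intro hlt j hj hjne
    rintro ⟨z, hzA, hzf⟩
    have hcoe : ((s₁ + 1 : ℝ) : 𝕋) = ((s₁ : ℝ) : 𝕋) := AddCircle.coe_add_period 1 s₁
    have hfq₁ : f q₁ = s₁ + 1 := by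
      apply rep_eq
      · rw [F1, ← hq₁s₁, hcoe]
      · linarith [(F2 q₁).2, hs₁.1, ht₀.2]
      · linarith [(F2 q₁).1, hs₁.1, ht₀.2]
    have h1 : s₁ + 1 ≤ sSup S := hfq₁ ▸ le_csSup hSbddA (Set.mem_image_of_mem f hq₁U)
    have h2 : sSup S ≤ t₀ + 1 := by
      have := (F2 z).2; rw [hzf] at this; exact this
    have hmem : sSup S - 1 ∈ Set.Ioo a₁ b₁ := ⟨by linarith [hs₁.1], by linarith [ht₀.2]⟩
    have hcoeσ : ((sSup S - 1 : ℝ) : 𝕋) = ((sSup S : ℝ) : 𝕋) := by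
      have := AddCircle.coe_add_period 1 (sSup S - 1)
      rw [sub_add_cancel] at this
      exact this.symm
    have : ((sSup S : ℝ) : 𝕋) ∈ oArc n j₁ := hcoeσ ▸ ⟨_, hmem, rfl⟩
    have hz1 : ((sSup S : ℝ) : 𝕋) = z := by rw [← hzf, F1]
    exact Set.eq_empty_iff_forall_notMem.1 (oArc_disjoint hj hj₁ hjne) z ⟨hzA, hz1 ▸ this⟩
  -- finish
  have hc2 := hcapt j₂ hj₂ (Ne.symm h12) q₂ p₂ hq₂A hq₂U hp₂A hp₂U
  have hc3 := hcapt j₃ hj₃ (Ne.symm h13) q₃ p₃ hq₃A hq₃U hp₃A hp₃U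
  have hdisj : ∀ w : ℝ, w ∈ f '' oArc n j₂ → w ∈ f '' oArc n j₃ → False := by
    rintro w ⟨z2, hz2, rfl⟩ ⟨z3, hz3, hz3f⟩
    have : z2 = z3 := F4 hz3f.symm
    exact Set.eq_empty_iff_forall_notMem.1 (oArc_disjoint hj₂ hj₃ h23) z2 ⟨hz2, this ▸ hz3⟩
  rcases lt_or_gt_of_ne hs₁t₀ with hlt | hgt
  · -- s₁ < t₀ : sSup blocked
    rcases hc2 with h2' | h2'
    · exact hblockSup hlt j₂ hj₂ (Ne.symm h12) h2'
    rcases hc3 with h3' | h3'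
    · exact hblockSup hlt j₃ hj₃ (Ne.symm h13) h3'
    exact hdisj _ h2' h3'
  · -- s₁ > t₀ : sInf blocked
    rcases hc2 with h2' | h2'
    swap
    · exact hblockInf hgt j₂ hj₂ (Ne.symm h12) h2'
    rcases hc3 with h3' | h3'
    swap
    · exact hblockInf hgt j₃ hj₃ (Ne.symm h13) h3'
    exact hdisj _ h2' h3'


section S1
variable {Δ : ℕ → ℕ → ℝ} (hΔ : IsS1 Δ)

lemma child_bounds (hΔ : IsS1 Δ) {n j : ℕ} (hj : j < 2 ^ (n + 1)) :
    Δ n (j / 2) / 2 ≤ Δ (n + 1) j ∧ Δ (n + 1) j ≤ Δ n (j / 2) := by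
  have hj2 : j / 2 < 2 ^ n := by
    have : j < 2 ^ n * 2 := by rw [← pow_succ]; exact hj
    omega
  obtain ⟨heq, hor⟩ := hΔ.2.2.1 n (j / 2) hj2
  have hpos := hΔ.2.1 n (j / 2) hj2
  have hj' : j = 2 * (j / 2) ∨ j = 2 * (j / 2) + 1 := by omega
  have key : Δ (n + 1) j = Δ (n + 1) (2 * (j / 2)) := by
    rcases hj' with h | h
    · exact congrArg _ h
    · rw [heq]; exact congrArg _ h
  rw [key]
  rcases hor with h' | h' <;> rw [h'] <;> constructor <;> linarith

lemma desc_ge (hΔ : IsS1 Δ) (n : ℕ) : ∀ (d : ℕ), ∀ j < 2 ^ (n + d),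
    Δ n (j / 2 ^ d) / 2 ^ d ≤ Δ (n + d) j := by
  intro d
  induction d with
  | zero => intro j hj; simp
  | succ d ih =>
    intro j hj
    have hj2 : j / 2 < 2 ^ (n + d) := by
      have : j < 2 ^ (n + d) * 2 := by rw [← pow_succ]; exact hj
      omega
    have hdiv : j / 2 ^ (d + 1) = (j / 2) / 2 ^ d := by
      rw [Nat.div_div_eq_div_mul]
      congr 1
      rw [pow_succ]; ring
    have hre : (2:ℝ) ^ (d+1) = 2 ^ d * 2 := by rw [pow_succ]
    have h1 : Δ n (j / 2 ^ (d+1)) / 2 ^ (d+1) = (Δ n ((j/2) / 2 ^ d) / 2 ^ d) / 2 := by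
      rw [hdiv, hre]; ring
    have h2 := ih (j / 2) hj2
    have h3 := (child_bounds hΔ (n := n + d) hj).1
    rw [h1]
    have : (Δ n ((j/2) / 2 ^ d) / 2 ^ d) / 2 ≤ Δ (n + d) (j / 2) / 2 := by linarith
    calc (Δ n ((j/2) / 2 ^ d) / 2 ^ d) / 2 ≤ Δ (n + d) (j / 2) / 2 := this
    _ ≤ Δ (n + d + 1) j := h3

lemma div_pow_lt {m n j : ℕ} (hmn : n < m) (hj : j < 2 ^ m) : j / 2 ^ (m - n) < 2 ^ n := by
  have hm : m = n + (m - n) := by omega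
  have : j < 2 ^ n * 2 ^ (m - n) := by rw [← pow_add, ← hm]; exact hj
  exact Nat.div_lt_of_lt_mul (by rwa [mul_comm] at this)

lemma trunc_pos (hΔ : IsS1 Δ) (n : ℕ) {m j : ℕ} (hj : j < 2 ^ m) : 0 < trunc Δ n m j := by
  unfold trunc
  split_ifs with h
  · exact hΔ.2.1 m j hj
  · have := hΔ.2.1 n _ (div_pow_lt (by omega) hj)
    positivity

lemma trunc_le (hΔ : IsS1 Δ) (n : ℕ) {m j : ℕ} (hj : j < 2 ^ m) : trunc Δ n m j ≤ Δ m j := by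
  unfold trunc
  split_ifs with h
  · exact le_refl _
  · push_neg at h
    have hm : m = n + (m - n) := by omega
    have := desc_ge hΔ n (m - n) j (by rwa [← hm])
    rwa [← hm] at this

lemma trunc_eq_of_le {Δ : ℕ → ℕ → ℝ} {n m j : ℕ} (h : m ≤ n) : trunc Δ n m j = Δ m j :=
  if_pos h

lemma trunc_deep {Δ : ℕ → ℕ → ℝ} {n m j : ℕ} (h : ¬ m ≤ n) :
    trunc Δ n m j = Δ n (j / 2 ^ (m - n)) / 2 ^ (m - n) := if_neg h

end S1

lemma arc_zero_univ : dyadicArc 0 0 = Set.univ := by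
  rw [dyadicArc_def]
  ext z
  simp only [Set.mem_image, Set.mem_univ, iff_true]
  obtain ⟨b, hb, hbz⟩ := AddCircle.eq_coe_Ico z
  exact ⟨b, by constructor <;> (push_cast; simp only [pow_zero]; rw [div_one]) <;>
    [exact hb.1; linarith [hb.2]], hbz⟩

lemma chainSums_mem_base (Δ' : ℕ → ℕ → ℝ) (x y : 𝕋) : Δ' 0 0 ∈ chainSums Δ' x y := by
  refine ⟨0, fun _ => (0, 0), ⟨fun k => by norm_num, ?_, ?_, ?_⟩, by simp⟩
  · have : (⋃ _ : Fin 1, dyadicArc 0 0) = dyadicArc 0 0 := Set.iUnion_const _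
    rw [this]; exact arc_connected 0 0
  · exact Set.mem_iUnion.2 ⟨0, by rw [arc_zero_univ]; trivial⟩
  · exact Set.mem_iUnion.2 ⟨0, by rw [arc_zero_univ]; trivial⟩

lemma chainSums_nonneg {Δ' : ℕ → ℕ → ℝ} (hpos : ∀ m j, j < 2 ^ m → 0 < Δ' m j) (x y : 𝕋) :
    ∀ s ∈ chainSums Δ' x y, 0 ≤ s := by
  rintro s ⟨N, c, ⟨hval, _, _, _⟩, rfl⟩
  exact Finset.sum_nonneg fun k _ => (hpos _ _ (hval k)).le

lemma chainSums_bddBelow {Δ' : ℕ → ℕ → ℝ} (hpos : ∀ m j, j < 2 ^ m → 0 < Δ' m j) (x y : 𝕋) :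
    BddBelow (chainSums Δ' x y) := ⟨0, fun s hs => chainSums_nonneg hpos x y s hs⟩

lemma mid_mem {m i n j : ℕ} (hmn : n < m) (hanc : i / 2 ^ (m - n) = j) :
    ∃ z : 𝕋, z ∈ dyadicArc m i ∧ z ∈ oArc n j := by
  set t : ℝ := ((i:ℝ)/2^m + ((i:ℝ)+1)/2^m)/2 with ht
  have hAB : (i:ℝ)/2^m < ((i:ℝ)+1)/2^m := arc_lt m i
  have h1 : t ∈ Set.Icc ((i:ℝ)/2^m) (((i:ℝ)+1)/2^m) := ⟨by rw [ht]; linarith, by rw [ht]; linarith⟩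
  have hincl := anc_incl (n := n) (m := m) (i := i) hmn
  rw [hanc] at hincl
  have h2 := hincl h1
  refine ⟨(t : ℝ), ⟨t, h1, rfl⟩, ⟨t, ⟨?_, ?_⟩, rfl⟩⟩
  · exact lt_of_le_of_lt (hincl ⟨le_refl _, hAB.le⟩).1 (by rw [ht]; linarith)
  · exact lt_of_lt_of_le (by rw [ht]; linarith) (hincl ⟨hAB.le, le_refl _⟩).2

open scoped Classical in
lemma key_surgery (Δ : ℕ → ℕ → ℝ) (hΔ : IsS1 Δ) (x y : 𝕋) (n : ℕ) (M : ℝ)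
    (hM1 : ∀ j < 2 ^ n, Δ n j ≤ M) (hM0 : 0 ≤ M) :
    ∀ s ∈ chainSums (trunc Δ n) x y, dOf Δ x y ≤ s + 2 * M := by
  rintro s ⟨N, c, ⟨hval, hconn, hx, hy⟩, rfl⟩
  set U := ⋃ k, dyadicArc (c k).1 (c k).2 with hUdef
  have harcU : ∀ k, dyadicArc (c k).1 (c k).2 ⊆ U := by
    intro k z hz
    rw [hUdef]
    exact Set.mem_iUnion.2 ⟨k, hz⟩
  have hUclosed : IsClosed U := isClosed_iUnion_of_finite fun k => arc_closed _ _
  set ancI : Fin (N+1) → ℕ := fun k => (c k).2 / 2 ^ ((c k).1 - n) with hancI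
  set Ksh : Finset (Fin (N+1)) := Finset.univ.filter (fun k => (c k).1 ≤ n) with hKsh
  set Kdp : Finset (Fin (N+1)) := Finset.univ.filter (fun k => ¬ (c k).1 ≤ n) with hKdp
  set containP : ℕ → Prop := fun j => ∃ k, (c k).1 ≤ n ∧
      Set.Icc ((j:ℝ)/2^n) (((j:ℝ)+1)/2^n)
        ⊆ Set.Icc (((c k).2:ℝ)/2^(c k).1) ((((c k).2:ℝ)+1)/2^(c k).1) with hcontainP
  set S' : Finset ℕ := (Kdp.image ancI).filter (fun j => ¬ containP j) with hS'
  -- basic validity facts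
  have hS'lt : ∀ j ∈ S', j < 2 ^ n := by
    intro j hj
    rw [hS', Finset.mem_filter, Finset.mem_image] at hj
    obtain ⟨⟨k, hk, rfl⟩, -⟩ := hj
    rw [hKdp, Finset.mem_filter] at hk
    exact div_pow_lt (by omega) (hval k)
  have hdeep_sub : ∀ k, ¬ (c k).1 ≤ n →
      dyadicArc (c k).1 (c k).2 ⊆ dyadicArc n (ancI k) := by
    intro k hk
    exact Set.image_mono (anc_incl (by omega))
  -- a point of `U` inside the open arc of each `j ∈ S'`
  have hS'meet : ∀ j ∈ S', (oArc n j ∩ U).Nonempty := by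
    intro j hj
    rw [hS', Finset.mem_filter, Finset.mem_image] at hj
    obtain ⟨⟨k, hk, rfl⟩, -⟩ := hj
    rw [hKdp, Finset.mem_filter] at hk
    obtain ⟨z, hz1, hz2⟩ := mid_mem (m := (c k).1) (i := (c k).2) (n := n)
      (lt_of_not_ge hk.2) rfl
    exact ⟨z, hz2, harcU k hz1⟩
  -- the coverage estimate for good arcs
  have hgood : ∀ j ∈ S', dyadicArc n j ⊆ U →
      Δ n j ≤ ∑ k ∈ Kdp.filter (fun k => ancI k = j), trunc Δ n (c k).1 (c k).2 := by
    intro j hjS hjU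
    have hjlt := hS'lt j hjS
    set F := Kdp.filter (fun k => ancI k = j) with hF
    set A : Fin (N+1) → ℝ := fun k => ((c k).2:ℝ)/2^(c k).1 with hA
    set B : Fin (N+1) → ℝ := fun k => (((c k).2:ℝ)+1)/2^(c k).1 with hB
    have hAB : ∀ k ∈ F, A k ≤ B k := fun k _ => (arc_lt _ _).le
    have hFdp : ∀ k ∈ F, ¬ (c k).1 ≤ n ∧ ancI k = j := by
      intro k hkF
      rw [hF, Finset.mem_filter, hKdp, Finset.mem_filter] at hkF
      exact ⟨hkF.1.2, hkF.2⟩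
    have hcov : Set.Ioo ((j:ℝ)/2^n) (((j:ℝ)+1)/2^n) ⊆ ⋃ k ∈ F, Set.Icc (A k) (B k) := by
      intro t ht
      have hends := endpoints_mem n j hjlt
      have ht01 : t ∈ Set.Ioo (0:ℝ) 1 :=
        ⟨lt_of_le_of_lt hends.1.1 ht.1, lt_of_lt_of_le ht.2 hends.2.2⟩
      have htU : ((t:ℝ):𝕋) ∈ U := hjU ⟨t, Set.Ioo_subset_Icc_self ht, rfl⟩
      rw [hUdef] at htU
      obtain ⟨k, hk⟩ := Set.mem_iUnion.1 htU
      obtain ⟨u, hu, huc⟩ := hk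
      have hendk := endpoints_mem (c k).1 (c k).2 (hval k)
      have hu01 : u ∈ Set.Icc (0:ℝ) 1 := ⟨le_trans hendk.1.1 hu.1, le_trans hu.2 hendk.2.2⟩
      have hut : u = t := rep_unique hu01 ht01 huc
      rw [hut] at hu
      rcases nest (hval k) hjlt hu ht with ⟨hle, hincl⟩ | ⟨hlt', hanc, hincl⟩
      · exfalso
        rw [hS', Finset.mem_filter] at hjS
        exact hjS.2 ⟨k, hle, hincl⟩
      · have hkF : k ∈ F := by
          rw [hF, Finset.mem_filter, hKdp, Finset.mem_filter]
          exact ⟨⟨Finset.mem_univ _, by omega⟩, hanc⟩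
        exact Set.mem_biUnion hkF hu
    have hlen := sum_len_ge F A B hAB _ _ hcov
    have hBA : ∀ k ∈ F, B k - A k = 1 / 2^(c k).1 := fun k _ => by rw [hA, hB]; ring
    have h1 : (1:ℝ)/2^n ≤ ∑ k ∈ F, (1:ℝ)/2^(c k).1 := by
      rw [← Finset.sum_congr rfl hBA]
      calc (1:ℝ)/2^n = ((j:ℝ)+1)/2^n - (j:ℝ)/2^n := by ring
      _ ≤ _ := hlen
    have hdpos := hΔ.2.1 n j hjlt
    have htr : ∀ k ∈ F, trunc Δ n (c k).1 (c k).2 = Δ n j * (2^n * ((1:ℝ)/2^(c k).1)) := by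
      intro k hkF
      obtain ⟨hdp, hanc⟩ := hFdp k hkF
      rw [trunc_deep hdp]
      have hancj : (c k).2 / 2 ^ ((c k).1 - n) = j := hanc
      rw [hancj]
      have hpow : (2:ℝ) ^ ((c k).1 - n) = 2 ^ (c k).1 / 2 ^ n := by
        rw [eq_div_iff (by positivity), ← pow_add]
        congr 1
        omega
      rw [hpow]
      have h2n : (2:ℝ)^n ≠ 0 := by positivity
      have h2m : (2:ℝ)^(c k).1 ≠ 0 := by positivity
      field_simp
    rw [Finset.sum_congr rfl htr, ← Finset.mul_sum, ← Finset.mul_sum]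
    have h2npos : (0:ℝ) < 2^n := by positivity
    have h2 : (1:ℝ) ≤ 2^n * ∑ k ∈ F, (1:ℝ)/2^(c k).1 := by
      calc (1:ℝ) = 2^n * (1/2^n) := by field_simp
      _ ≤ 2^n * ∑ k ∈ F, (1:ℝ)/2^(c k).1 := by
        exact mul_le_mul_of_nonneg_left h1 h2npos.le
    nlinarith [h2, hdpos]
  -- at most two bad arcs
  have hbad : (S'.filter (fun j => ¬ dyadicArc n j ⊆ U)).card ≤ 2 := by
    have hsub : S'.filter (fun j => ¬ dyadicArc n j ⊆ U) ⊆
        (Finset.range (2^n)).filter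
          (fun j => (oArc n j ∩ U).Nonempty ∧ (oArc n j \ U).Nonempty) := by
      intro j hj
      rw [Finset.mem_filter] at hj
      obtain ⟨hjS, hjnU⟩ := hj
      rw [Finset.mem_filter, Finset.mem_range]
      refine ⟨hS'lt j hjS, hS'meet j hjS, ?_⟩
      by_contra hc
      rw [Set.not_nonempty_iff_eq_empty, Set.diff_eq_empty] at hc
      apply hjnU
      calc dyadicArc n j ⊆ closure (oArc n j) := arc_subset_closure_oArc n j
      _ ⊆ closure U := closure_mono hc
      _ = U := hUclosed.closure_eq
    exact le_trans (Finset.card_le_card hsub) (bad_card_le_two n U hconn)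
  -- construction of the new chain
  have hcardpos : 0 < Ksh.card + S'.card := by
    by_contra hc
    push_neg at hc
    have h1 : Ksh = ∅ := Finset.card_eq_zero.1 (by omega)
    have h2 : S' = ∅ := Finset.card_eq_zero.1 (by omega)
    by_cases hsh : (c 0).1 ≤ n
    · have : (0 : Fin (N+1)) ∈ Ksh := by
        rw [hKsh, Finset.mem_filter]; exact ⟨Finset.mem_univ _, hsh⟩
      rw [h1] at this; exact absurd this (Finset.notMem_empty _)
    · by_cases hcp : containP (ancI 0)
      · obtain ⟨k', hk'1, -⟩ := hcp
        have : k' ∈ Ksh := by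
          rw [hKsh, Finset.mem_filter]; exact ⟨Finset.mem_univ _, hk'1⟩
        rw [h1] at this; exact absurd this (Finset.notMem_empty _)
      · have : ancI 0 ∈ S' := by
          rw [hS', Finset.mem_filter]
          refine ⟨Finset.mem_image_of_mem _ ?_, hcp⟩
          rw [hKdp, Finset.mem_filter]; exact ⟨Finset.mem_univ _, hsh⟩
        rw [h2] at this; exact absurd this (Finset.notMem_empty _)
  set N' : ℕ := Ksh.card + S'.card - 1 with hN'def
  have hN' : N' + 1 = Ksh.card + S'.card := by omega
  set g : Fin Ksh.card ⊕ Fin S'.card → ℕ × ℕ :=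
    Sum.elim (fun a => c (Ksh.equivFin.symm a).1) (fun b => (n, (S'.equivFin.symm b).1)) with hg
  set c' : Fin (N'+1) → ℕ × ℕ := fun i => g (finSumFinEquiv.symm (Fin.cast hN' i)) with hc'
  have hgvalid : ∀ s0, (g s0).2 < 2 ^ (g s0).1 := by
    rintro (a | b)
    · exact hval _
    · exact hS'lt _ (S'.equivFin.symm b).2
  have hc'valid : ∀ i, (c' i).2 < 2 ^ (c' i).1 := fun i => hgvalid _
  set Unew := ⋃ i, dyadicArc (c' i).1 (c' i).2 with hUnew
  have hsurj : ∀ s0, ∃ i : Fin (N'+1), c' i = g s0 := by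
    intro s0
    refine ⟨Fin.cast hN'.symm (finSumFinEquiv s0), ?_⟩
    have hcast : Fin.cast hN' (Fin.cast hN'.symm (finSumFinEquiv s0)) = finSumFinEquiv s0 :=
      Fin.ext (by simp)
    show g (finSumFinEquiv.symm (Fin.cast hN' (Fin.cast hN'.symm (finSumFinEquiv s0)))) = g s0
    rw [hcast, Equiv.symm_apply_apply]
  have hgUnew : ∀ s0, dyadicArc (g s0).1 (g s0).2 ⊆ Unew := by
    intro s0
    obtain ⟨i, hi⟩ := hsurj s0
    rw [← hi, hUnew]
    intro z hz
    exact Set.mem_iUnion.2 ⟨i, hz⟩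
  have hUsub : U ⊆ Unew := by
    rw [hUdef]
    intro z hz
    obtain ⟨k, hk⟩ := Set.mem_iUnion.1 hz
    by_cases hsh : (c k).1 ≤ n
    · have hkK : k ∈ Ksh := by
        rw [hKsh, Finset.mem_filter]; exact ⟨Finset.mem_univ _, hsh⟩
      have hgl : g (Sum.inl (Ksh.equivFin ⟨k, hkK⟩)) = c k := by
        rw [hg]; simp
      exact hgUnew (Sum.inl (Ksh.equivFin ⟨k, hkK⟩)) (by rw [hgl]; exact hk)
    · have hzanc : z ∈ dyadicArc n (ancI k) := hdeep_sub k hsh hk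
      by_cases hcp : containP (ancI k)
      · obtain ⟨k', hk'1, hk'2⟩ := hcp
        have hkK : k' ∈ Ksh := by
          rw [hKsh, Finset.mem_filter]; exact ⟨Finset.mem_univ _, hk'1⟩
        have hzk' : z ∈ dyadicArc (c k').1 (c k').2 := by
          rw [dyadicArc_def]
          exact Set.image_mono hk'2 hzanc
        have hgl : g (Sum.inl (Ksh.equivFin ⟨k', hkK⟩)) = c k' := by
          rw [hg]; simp
        exact hgUnew (Sum.inl (Ksh.equivFin ⟨k', hkK⟩)) (by rw [hgl]; exact hzk')
      · have hmemS : ancI k ∈ S' := by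
          rw [hS', Finset.mem_filter]
          refine ⟨Finset.mem_image_of_mem _ ?_, hcp⟩
          rw [hKdp, Finset.mem_filter]; exact ⟨Finset.mem_univ _, hsh⟩
        have hgl : g (Sum.inr (S'.equivFin ⟨ancI k, hmemS⟩)) = (n, ancI k) := by
          rw [hg]; simp
        exact hgUnew (Sum.inr (S'.equivFin ⟨ancI k, hmemS⟩)) (by rw [hgl]; exact hzanc)
  have hmeets : ∀ s0, (dyadicArc (g s0).1 (g s0).2 ∩ U).Nonempty := by
    rintro (a | b)
    · obtain ⟨z, hz⟩ := arc_nonempty (c (Ksh.equivFin.symm a).1).1 (c (Ksh.equivFin.symm a).1).2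
      exact ⟨z, hz, harcU _ hz⟩
    · obtain ⟨z, hz1, hz2⟩ := hS'meet _ (S'.equivFin.symm b).2
      exact ⟨z, oArc_subset_arc _ _ hz1, hz2⟩
  have hUnewconn : IsConnected Unew := by
    refine ⟨⟨x, hUsub hx⟩, ?_⟩
    have hrw : Unew = ⋃ i : Fin (N'+1), (dyadicArc (c' i).1 (c' i).2 ∪ U) := by
      rw [hUnew]
      ext z
      simp only [Set.mem_iUnion, Set.mem_union]
      constructor
      · rintro ⟨i, hi⟩; exact ⟨i, Or.inl hi⟩
      · rintro ⟨i, hi | hiU⟩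
        · exact ⟨i, hi⟩
        · exact Set.mem_iUnion.1 (hUsub hiU)
    rw [hrw]
    apply isPreconnected_iUnion
    · exact ⟨x, Set.mem_iInter.2 fun i => Or.inr hx⟩
    · intro i
      exact (IsConnected.union (hmeets _) (arc_connected _ _) hconn).isPreconnected
  have hmem : (∑ i, Δ (c' i).1 (c' i).2) ∈ chainSums Δ x y :=
    ⟨N', c', ⟨hc'valid, by rw [← hUnew]; exact hUnewconn, hUsub hx, hUsub hy⟩, rfl⟩
  have hdle : dOf Δ x y ≤ ∑ i, Δ (c' i).1 (c' i).2 :=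
    csInf_le (chainSums_bddBelow (fun m j hj => hΔ.2.1 m j hj) x y) hmem
  -- compute the new sum
  have hsum : ∑ i, Δ (c' i).1 (c' i).2
      = (∑ k ∈ Ksh, Δ (c k).1 (c k).2) + ∑ j ∈ S', Δ n j := by
    calc ∑ i, Δ (c' i).1 (c' i).2
        = ∑ i, Δ (g ((finCongr hN').trans finSumFinEquiv.symm i)).1
            (g ((finCongr hN').trans finSumFinEquiv.symm i)).2 := rfl
    _ = ∑ s0 : Fin Ksh.card ⊕ Fin S'.card, Δ (g s0).1 (g s0).2 :=
          Equiv.sum_comp ((finCongr hN').trans finSumFinEquiv.symm)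
            (fun s0 => Δ (g s0).1 (g s0).2)
    _ = (∑ a : Fin Ksh.card, Δ (g (Sum.inl a)).1 (g (Sum.inl a)).2)
          + ∑ b : Fin S'.card, Δ (g (Sum.inr b)).1 (g (Sum.inr b)).2 :=
          Fintype.sum_sum_type _
    _ = (∑ a : Fin Ksh.card, Δ (c (Ksh.equivFin.symm a).1).1 (c (Ksh.equivFin.symm a).1).2)
          + ∑ b : Fin S'.card, Δ n (S'.equivFin.symm b).1 := rfl
    _ = (∑ z : {k // k ∈ Ksh}, Δ (c z.1).1 (c z.1).2) + ∑ z : {j // j ∈ S'}, Δ n z.1 := by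
          rw [Equiv.sum_comp Ksh.equivFin.symm (fun z => Δ (c z.1).1 (c z.1).2),
            Equiv.sum_comp S'.equivFin.symm (fun z => Δ n z.1)]
    _ = _ := by
          rw [Finset.sum_coe_sort Ksh (fun k => Δ (c k).1 (c k).2),
            Finset.sum_coe_sort S' (fun j => Δ n j)]
  -- the old sum
  have hold : ∑ k, trunc Δ n (c k).1 (c k).2
      = (∑ k ∈ Ksh, trunc Δ n (c k).1 (c k).2) + ∑ k ∈ Kdp, trunc Δ n (c k).1 (c k).2 := by
    rw [hKsh, hKdp]
    exact (Finset.sum_filter_add_sum_filter_not Finset.univ _ _).symm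
  have hsheq : ∑ k ∈ Ksh, Δ (c k).1 (c k).2 = ∑ k ∈ Ksh, trunc Δ n (c k).1 (c k).2 := by
    apply Finset.sum_congr rfl
    intro k hk
    rw [hKsh, Finset.mem_filter] at hk
    exact (trunc_eq_of_le hk.2).symm
  have hsplit : ∑ j ∈ S', Δ n j
      = (∑ j ∈ S'.filter (fun j => dyadicArc n j ⊆ U), Δ n j)
        + ∑ j ∈ S'.filter (fun j => ¬ dyadicArc n j ⊆ U), Δ n j :=
    (Finset.sum_filter_add_sum_filter_not S' _ _).symm
  have hbadsum : ∑ j ∈ S'.filter (fun j => ¬ dyadicArc n j ⊆ U), Δ n j ≤ 2 * M := by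
    have hle := Finset.sum_le_card_nsmul (S'.filter (fun j => ¬ dyadicArc n j ⊆ U))
      (fun j => Δ n j) M
      (fun j hj => hM1 j (hS'lt j (Finset.mem_filter.1 hj).1))
    calc ∑ j ∈ S'.filter (fun j => ¬ dyadicArc n j ⊆ U), Δ n j
        ≤ (S'.filter (fun j => ¬ dyadicArc n j ⊆ U)).card • M := hle
    _ = ((S'.filter (fun j => ¬ dyadicArc n j ⊆ U)).card : ℝ) * M := nsmul_eq_mul _ _
    _ ≤ 2 * M := by
          apply mul_le_mul_of_nonneg_right _ hM0
          exact_mod_cast hbad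
  have hgoodsum : ∑ j ∈ S'.filter (fun j => dyadicArc n j ⊆ U), Δ n j
      ≤ ∑ k ∈ Kdp, trunc Δ n (c k).1 (c k).2 := by
    calc ∑ j ∈ S'.filter (fun j => dyadicArc n j ⊆ U), Δ n j
        ≤ ∑ j ∈ S'.filter (fun j => dyadicArc n j ⊆ U),
            ∑ k ∈ Kdp.filter (fun k => ancI k = j), trunc Δ n (c k).1 (c k).2 :=
          Finset.sum_le_sum fun j hj =>
            hgood j (Finset.mem_filter.1 hj).1 (Finset.mem_filter.1 hj).2
    _ = ∑ k ∈ Kdp.filter (fun k => ancI k ∈ S'.filter (fun j => dyadicArc n j ⊆ U)),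
            trunc Δ n (c k).1 (c k).2 :=
          Finset.sum_fiberwise_eq_sum_filter _ _ _ _
    _ ≤ ∑ k ∈ Kdp, trunc Δ n (c k).1 (c k).2 :=
          Finset.sum_le_sum_of_subset_of_nonneg (Finset.filter_subset _ _)
            (fun k _ _ => (trunc_pos hΔ n (hval k)).le)
  calc dOf Δ x y ≤ ∑ i, Δ (c' i).1 (c' i).2 := hdle
  _ = (∑ k ∈ Ksh, Δ (c k).1 (c k).2) + ∑ j ∈ S', Δ n j := hsum
  _ ≤ (∑ k ∈ Ksh, trunc Δ n (c k).1 (c k).2)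
        + (∑ k ∈ Kdp, trunc Δ n (c k).1 (c k).2 + 2 * M) := by
      rw [← hsheq]
      have := hsplit
      linarith [hbadsum, hgoodsum]
  _ = (∑ k, trunc Δ n (c k).1 (c k).2) + 2 * M := by rw [hold]; ring


/-- A chain of dyadic arcs is minimal if the arcs have pairwise disjoint interiors and no
union of at least two distinct arcs from the chain equals a dyadic arc. -/
def IsMinimalChain (N : ℕ) (c : Fin (N + 1) → ℕ × ℕ) : Prop :=
  (∀ k l : Fin (N + 1), k ≠ l →
    interior (dyadicArc (c k).1 (c k).2) ∩ interior (dyadicArc (c l).1 (c l).2) = ∅) ∧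
  (∀ T : Finset (Fin (N + 1)), 2 ≤ T.card →
    ¬∃ m j : ℕ, j < 2 ^ m ∧ (⋃ k ∈ T, dyadicArc (c k).1 (c k).2) = dyadicArc m j)

/-- For all `x, y ∈ 𝕊` and every `n`, `d_Δ(x,y) ≤ d_n(x,y) + 2·max{Δ(I) : I ∈ ℐ_n}`;
in particular `d_n(x,y) → d_Δ(x,y)` as `n → ∞`. -/
theorem dOf_le_dOf_trunc_add_two_max (Δ : ℕ → ℕ → ℝ) (hΔ : IsS1 Δ)
    (x y : AddCircle (1 : ℝ)) :
    (∀ (n : ℕ) (M : ℝ), (∀ j < 2 ^ n, Δ n j ≤ M) → (∃ j < 2 ^ n, Δ n j = M) →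
      dOf Δ x y ≤ dOf (trunc Δ n) x y + 2 * M) ∧
    Filter.Tendsto (fun n : ℕ => dOf (trunc Δ n) x y) Filter.atTop (nhds (dOf Δ x y)) := by
  have hne : ∀ (Δ' : ℕ → ℕ → ℝ), (chainSums Δ' x y).Nonempty :=
    fun Δ' => ⟨_, chainSums_mem_base Δ' x y⟩
  have part1 : ∀ (n : ℕ) (M : ℝ), (∀ j < 2 ^ n, Δ n j ≤ M) → (∃ j < 2 ^ n, Δ n j = M) →
      dOf Δ x y ≤ dOf (trunc Δ n) x y + 2 * M := by
    intro n M hM1 hM2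
    obtain ⟨j₀, hj₀, hj₀M⟩ := hM2
    have hM0 : 0 ≤ M := hj₀M ▸ (hΔ.2.1 n j₀ hj₀).le
    have hkey := key_surgery Δ hΔ x y n M hM1 hM0
    have h1 : dOf Δ x y - 2 * M ≤ dOf (trunc Δ n) x y := by
      apply le_csInf (hne _)
      intro s hs
      linarith [hkey s hs]
    linarith
  refine ⟨part1, ?_⟩
  have hup : ∀ n, dOf (trunc Δ n) x y ≤ dOf Δ x y := by
    intro n
    apply le_csInf (hne Δ)
    rintro s ⟨N, c, hchain, rfl⟩
    have hmem : (∑ k, trunc Δ n (c k).1 (c k).2) ∈ chainSums (trunc Δ n) x y :=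
      ⟨N, c, hchain, rfl⟩
    calc dOf (trunc Δ n) x y ≤ ∑ k, trunc Δ n (c k).1 (c k).2 :=
        csInf_le (chainSums_bddBelow (fun m j hj => trunc_pos hΔ n hj) x y) hmem
    _ ≤ ∑ k, Δ (c k).1 (c k).2 := Finset.sum_le_sum fun k _ => trunc_le hΔ n (hchain.1 k)
  have hmax : ∀ n : ℕ, ∃ M : ℝ, (∀ j < 2^n, Δ n j ≤ M) ∧ (∃ j < 2^n, Δ n j = M) := by
    intro n
    have hne' : ((Finset.range (2^n)).image (Δ n)).Nonempty :=
      ⟨Δ n 0, Finset.mem_image_of_mem _ (Finset.mem_range.2 (by positivity))⟩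
    refine ⟨((Finset.range (2^n)).image (Δ n)).max' hne', ?_, ?_⟩
    · intro j hj
      exact Finset.le_max' _ _ (Finset.mem_image_of_mem _ (Finset.mem_range.2 hj))
    · obtain ⟨j, hj, hjeq⟩ := Finset.mem_image.1 (Finset.max'_mem _ hne')
      exact ⟨j, Finset.mem_range.1 hj, hjeq⟩
  choose Mn hMn1 hMn2 using hmax
  rw [Metric.tendsto_atTop]
  intro ε hε
  obtain ⟨Nb, hNb⟩ := hΔ.2.2.2 (ε/3) (by linarith)
  refine ⟨Nb, fun n hn => ?_⟩
  obtain ⟨j₀, hj₀, hj₀M⟩ := hMn2 n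
  have hMnlt : Mn n < ε/3 := hj₀M ▸ hNb n hn j₀ hj₀
  have hlow := part1 n (Mn n) (hMn1 n) ⟨j₀, hj₀, hj₀M⟩
  have h1 := hup n
  rw [Real.dist_eq, abs_of_nonpos (by linarith)]
  linarith
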